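/- Let k be odd and let A be a Heffter array H(n;k) whose non-empty cells are exactly the union of k diagonals D_{g(1)}, …, D_{g(k)} with 0 ≤ g(1) < g(2) < ⋯ < g(k) ≤ n−1. For h = 2,…,k set s_h = g(h) − g(h−1) (mod n) and set s_1 = g(1) − g(k) (mod n). If gcd(n, s_h) = 1 for all h = 1,…,k and A is globally simple, then A has an ordering which is both simple and compatible; that is, there is a choice of simple cyclic orderings of all rows and all columns for which the composed row permutation ω_r and composed column permutation ω_c are compatible. -/

import Mathlib

set_option linter.unusedSectionVars false
set_option maxHeartbeats 1000000

open Fin.NatCast Fin.CommRing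

/-- A square Heffter array `H(n;k)`: an `n × n` partially filled array of integers
(empty cells represented by `0`), rows and columns indexed by `ZMod n`, such that each
row and each column has exactly `k` filled cells, every row and column sums to `0`
modulo `2nk+1`, and for each `1 ≤ x ≤ nk` exactly one of `x, -x` appears, in exactly
one cell. -/
def IsHeffterSq (n k : ℕ) [NeZero n] (A : ZMod n → ZMod n → ℤ) : Prop :=
  (∀ a : ZMod n, (Finset.univ.filter (fun b => A a b ≠ 0)).card = k) ∧
  (∀ b : ZMod n, (Finset.univ.filter (fun a => A a b ≠ 0)).card = k) ∧
  (∀ a : ZMod n, (∑ b : ZMod n, A a b) ≡ 0 [ZMOD (2 * n * k + 1)]) ∧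
  (∀ b : ZMod n, (∑ a : ZMod n, A a b) ≡ 0 [ZMOD (2 * n * k + 1)]) ∧
  (∀ a b : ZMod n, A a b ≠ 0 → (A a b).natAbs ∈ Finset.Icc 1 (n * k)) ∧
  (∀ v ∈ Finset.Icc 1 (n * k), ∃! c : ZMod n × ZMod n, (A c.1 c.2).natAbs = v)

/-- The natural (left-to-right, top-to-bottom) orderings of all rows and columns are
simple: for every row the partial sums at filled positions are pairwise distinct
modulo `M`, and likewise for every column.  Positions are listed by the natural
number representatives `0, 1, …, n-1` of the indices. -/
def NatOrdSimple (n : ℕ) (M : ℤ) (A : ZMod n → ZMod n → ℤ) : Prop :=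
  (∀ a : ZMod n, ∀ t₁ < n, ∀ t₂ < n,
    A a (t₁ : ZMod n) ≠ 0 → A a (t₂ : ZMod n) ≠ 0 →
    (∑ x ∈ Finset.range (t₁ + 1), A a (x : ZMod n)) ≡
      (∑ x ∈ Finset.range (t₂ + 1), A a (x : ZMod n)) [ZMOD M] → t₁ = t₂) ∧
  (∀ b : ZMod n, ∀ t₁ < n, ∀ t₂ < n,
    A (t₁ : ZMod n) b ≠ 0 → A (t₂ : ZMod n) b ≠ 0 →
    (∑ x ∈ Finset.range (t₁ + 1), A (x : ZMod n) b) ≡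
      (∑ x ∈ Finset.range (t₂ + 1), A (x : ZMod n) b) [ZMOD M] → t₁ = t₂)

/-- `σ` is a composition of disjoint cycles, one for each row: it preserves rows,
fixes empty cells, and acts transitively on the filled cells of each row. -/
def IsRowOrdSq (n : ℕ) (A : ZMod n → ZMod n → ℤ)
    (σ : Equiv.Perm (ZMod n × ZMod n)) : Prop :=
  (∀ c, (σ c).1 = c.1) ∧ (∀ c, A c.1 c.2 = 0 → σ c = c) ∧
  (∀ c c' : ZMod n × ZMod n, c.1 = c'.1 → A c.1 c.2 ≠ 0 → A c'.1 c'.2 ≠ 0 →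
    ∃ e : ℕ, (σ ^ e) c = c')

/-- `σ` is a composition of disjoint cycles, one for each column. -/
def IsColOrdSq (n : ℕ) (A : ZMod n → ZMod n → ℤ)
    (σ : Equiv.Perm (ZMod n × ZMod n)) : Prop :=
  (∀ c, (σ c).2 = c.2) ∧ (∀ c, A c.1 c.2 = 0 → σ c = c) ∧
  (∀ c c' : ZMod n × ZMod n, c.2 = c'.2 → A c.1 c.2 ≠ 0 → A c'.1 c'.2 ≠ 0 →
    ∃ e : ℕ, (σ ^ e) c = c')

/-- The cyclic ordering determined by `σ` (on the rows, resp. columns, of a square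
Heffter array `H(n;k)`) is simple: starting from any filled cell, the `k` successive
partial sums along the cycle are pairwise distinct modulo `2nk+1`. -/
def OrdSimple (n k : ℕ) (A : ZMod n → ZMod n → ℤ)
    (σ : Equiv.Perm (ZMod n × ZMod n)) : Prop :=
  ∀ c : ZMod n × ZMod n, A c.1 c.2 ≠ 0 → ∀ t₁ < k, ∀ t₂ < k,
    (∑ j ∈ Finset.range (t₁ + 1), A ((σ ^ j) c).1 ((σ ^ j) c).2) ≡
      (∑ j ∈ Finset.range (t₂ + 1), A ((σ ^ j) c).1 ((σ ^ j) c).2)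
        [ZMOD (2 * n * k + 1)] → t₁ = t₂

/-- Compatibility: `ω_r ∘ ω_c` (apply `ω_r` first, then `ω_c`, following the paper's
convention) is a single cycle on the `nk` filled cells. -/
def CompatibleSq (n : ℕ) (A : ZMod n → ZMod n → ℤ)
    (ωr ωc : Equiv.Perm (ZMod n × ZMod n)) : Prop :=
  ∀ c c' : ZMod n × ZMod n, A c.1 c.2 ≠ 0 → A c'.1 c'.2 ≠ 0 →
    ∃ e : ℕ, ((ωr.trans ωc) ^ e) c = c'


namespace Heffter



variable {n k : ℕ}

lemma valSubNat [NeZero n] (x y : ℕ) (hx : x < n) (hy : y < n) :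
    ((x : ZMod n) - (y : ZMod n)).val = if y ≤ x then x - y else x + n - y := by
  split_ifs with h
  · have : (x : ZMod n) - (y : ZMod n) = ((x - y : ℕ) : ZMod n) := by
      rw [Nat.cast_sub h]
    rw [this, ZMod.val_cast_of_lt (by omega)]
  · have : (x : ZMod n) - (y : ZMod n) = ((x + n - y : ℕ) : ZMod n) := by
      rw [Nat.cast_sub (by omega)]
      push_cast [ZMod.natCast_self]
      ring
    rw [this, ZMod.val_cast_of_lt (by omega)]

lemma dInj [NeZero n] {g : Fin k → ℕ} (hmono : StrictMono g) (hgn : ∀ h, g h < n) :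
    Function.Injective (fun h : Fin k => (g h : ZMod n)) := by
  intro a b hab
  simp only at hab
  have : g a = g b := by
    have ha := ZMod.val_cast_of_lt (hgn a)
    have hb := ZMod.val_cast_of_lt (hgn b)
    rw [← ha, ← hb, hab]
  exact hmono.injective this

lemma finValAddOne [NeZero k] (h2 : 2 ≤ k) (a : Fin k) :
    (a + 1).val = if a.val + 1 = k then 0 else a.val + 1 := by
  have h1 : (1 : Fin k).val = 1 := by
    rw [← Nat.cast_one, Fin.val_natCast]
    exact Nat.mod_eq_of_lt (by omega)
  have hv : (a + 1).val = (a.val + (1:Fin k).val) % k := by rw [Fin.add_def]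
  rw [h1] at hv
  have hak : a.val < k := a.isLt
  split_ifs with h
  · rw [hv, h, Nat.mod_self]
  · rw [hv, Nat.mod_eq_of_lt (by omega)]

section Claims

variable [NeZero n] [NeZero k] {g : Fin k → ℕ}

lemma claimA (hmono : StrictMono g) (hgn : ∀ h, g h < n) (h2 : 2 ≤ k)
    (h j : Fin k) (hj1 : j ≠ h) (hj2 : j ≠ h + 1) :
    ((g (h+1) : ZMod n) - (g h : ZMod n)).val < ((g (h+1) : ZMod n) - (g j : ZMod n)).val := by
  have hval := finValAddOne h2 h
  rw [valSubNat _ _ (hgn _) (hgn _), valSubNat _ _ (hgn _) (hgn _)]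
  have hm : ∀ p q : Fin k, p.val < q.val → g p < g q :=
    fun p q hpq => hmono (by rwa [Fin.lt_def])
  have hj1v : j.val ≠ h.val := fun e => hj1 (Fin.ext e)
  have hj2v : j.val ≠ (h+1).val := fun e => hj2 (Fin.ext e)
  have hgnh := hgn h; have hgnh1 := hgn (h+1); have hgnj := hgn j
  have hjk : j.val < k := j.isLt
  by_cases hlast : h.val + 1 = k
  · rw [if_pos hlast] at hval
    have gj1 : g (h+1) < g j := hm _ _ (by omega)
    have gjh : g j < g h := hm _ _ (by omega)
    rw [if_neg (by omega), if_neg (by omega)]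
    omega
  · rw [if_neg hlast] at hval
    have ghh1 : g h < g (h+1) := hm _ _ (by omega)
    rw [if_pos (le_of_lt ghh1)]
    rcases Nat.lt_or_ge j.val h.val with hc | hc
    · have gjh : g j < g h := hm _ _ hc
      rw [if_pos (by omega)]
      omega
    · have gj1 : g (h+1) < g j := hm _ _ (by omega)
      rw [if_neg (by omega)]
      omega

lemma claimB (hmono : StrictMono g) (hgn : ∀ h, g h < n) (h2 : 2 ≤ k)
    (h j : Fin k) (hj1 : j ≠ h) (hj2 : j ≠ h + 1) :
    ((g (h+1) : ZMod n) - (g h : ZMod n)).val < ((g j : ZMod n) - (g h : ZMod n)).val := by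
  have hval := finValAddOne h2 h
  rw [valSubNat _ _ (hgn _) (hgn _), valSubNat _ _ (hgn _) (hgn _)]
  have hm : ∀ p q : Fin k, p.val < q.val → g p < g q :=
    fun p q hpq => hmono (by rwa [Fin.lt_def])
  have hj1v : j.val ≠ h.val := fun e => hj1 (Fin.ext e)
  have hj2v : j.val ≠ (h+1).val := fun e => hj2 (Fin.ext e)
  have hgnh := hgn h; have hgnh1 := hgn (h+1); have hgnj := hgn j
  have hjk : j.val < k := j.isLt
  by_cases hlast : h.val + 1 = k
  · rw [if_pos hlast] at hval
    have gj1 : g (h+1) < g j := hm _ _ (by omega)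
    have gjh : g j < g h := hm _ _ (by omega)
    rw [if_neg (by omega), if_neg (by omega)]
    omega
  · rw [if_neg hlast] at hval
    have ghh1 : g h < g (h+1) := hm _ _ (by omega)
    rw [if_pos (le_of_lt ghh1)]
    rcases Nat.lt_or_ge j.val h.val with hc | hc
    · have gjh : g j < g h := hm _ _ hc
      rw [if_neg (by omega)]
      omega
    · have gj1 : g (h+1) < g j := hm _ _ (by omega)
      rw [if_pos (by omega)]
      omega

end Claims




variable {n k : ℕ}

section Defs

variable [NeZero n] [NeZero k]

def Fcell (g : Fin k → ℕ) (x : Fin k × ZMod n) : ZMod n × ZMod n :=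
  (x.2 + (g x.1 : ZMod n), x.2)

def rhoR (g : Fin k → ℕ) : Equiv.Perm (Fin k × ZMod n) where
  toFun x := (x.1 - 1, x.2 + (g x.1 : ZMod n) - (g (x.1 - 1) : ZMod n))
  invFun x := (x.1 + 1, x.2 - (g (x.1 + 1) : ZMod n) + (g x.1 : ZMod n))
  left_inv x := by
    obtain ⟨h, i⟩ := x
    simp only [sub_add_cancel]
    exact Prod.ext rfl (by ring)
  right_inv x := by
    obtain ⟨h, i⟩ := x
    simp only [add_sub_cancel_right]
    exact Prod.ext rfl (by ring)

def rhoC : Equiv.Perm (Fin k × ZMod n) where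
  toFun x := (if x.2 = 0 then x.1 - 1 else x.1 + 1, x.2)
  invFun x := (if x.2 = 0 then x.1 + 1 else x.1 - 1, x.2)
  left_inv x := by
    obtain ⟨h, i⟩ := x
    by_cases hi : i = 0 <;> simp [hi]
  right_inv x := by
    obtain ⟨h, i⟩ := x
    by_cases hi : i = 0 <;> simp [hi]

lemma rhoR_apply (g : Fin k → ℕ) (h : Fin k) (i : ZMod n) :
    rhoR g (h, i) = (h - 1, i + (g h : ZMod n) - (g (h - 1) : ZMod n)) := rfl

lemma rhoC_apply (h : Fin k) (i : ZMod n) :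
    (rhoC (h, i) : Fin k × ZMod n) = (if i = 0 then h - 1 else h + 1, i) := rfl

def pFill (g : Fin k → ℕ) (c : ZMod n × ZMod n) : Prop :=
  ∃ h : Fin k, c.1 - c.2 = (g h : ZMod n)

lemma Fcell_fill (g : Fin k → ℕ) (x : Fin k × ZMod n) : pFill g (Fcell g x) :=
  ⟨x.1, by simp [Fcell]⟩

noncomputable def feq (g : Fin k → ℕ) (hd : Function.Injective (fun h : Fin k => (g h : ZMod n))) :
    (Fin k × ZMod n) ≃ {c : ZMod n × ZMod n // pFill g c} :=
  Equiv.ofBijective (fun x => ⟨Fcell g x, Fcell_fill g x⟩) (by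
    constructor
    · intro x y hxy
      have h2 : x.2 = y.2 := congrArg (fun c => c.1.2) hxy
      have h1 : x.2 + (g x.1 : ZMod n) = y.2 + (g y.1 : ZMod n) :=
        congrArg (fun c => c.1.1) hxy
      rw [h2] at h1
      have := hd (add_left_cancel h1)
      exact Prod.ext this h2
    · rintro ⟨c, h, hc⟩
      refine ⟨(h, c.2), Subtype.ext ?_⟩
      simp only [Fcell]
      have : c.1 = c.2 + (g h : ZMod n) := by
        rw [← hc]; ring
      exact Prod.ext this.symm rfl)

lemma feq_coe (g : Fin k → ℕ) (hd : Function.Injective (fun h : Fin k => (g h : ZMod n)))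
    (x : Fin k × ZMod n) : ((feq g hd x : {c // pFill g c}) : ZMod n × ZMod n) = Fcell g x := rfl

-- iterates of rhoR and rhoC
lemma rhoR_iter (g : Fin k → ℕ) (m : ℕ) (h : Fin k) (i : ZMod n) :
    (rhoR g)^[m] (h, i) = (h - (m : Fin k), i + (g h : ZMod n) - (g (h - (m : Fin k)) : ZMod n)) := by
  induction m with
  | zero => simp
  | succ m ih =>
    rw [Function.iterate_succ_apply', ih, rhoR_apply]
    have hc : ((m+1 : ℕ) : Fin k) = (m : Fin k) + 1 := by push_cast; ring
    rw [hc]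
    have key : h - (m:Fin k) - 1 = h - ((m:Fin k)+1) := by ring
    rw [key]
    exact Prod.ext rfl (by ring)

lemma rhoC_iter_ne (m : ℕ) (h : Fin k) (i : ZMod n) (hi : i ≠ 0) :
    (rhoC)^[m] (h, i) = (h + (m : Fin k), i) := by
  induction m with
  | zero => simp
  | succ m ih =>
    rw [Function.iterate_succ_apply', ih, rhoC_apply, if_neg hi]
    have hc : ((m+1 : ℕ) : Fin k) = (m : Fin k) + 1 := by push_cast; ring
    rw [hc]
    exact Prod.ext (by ring) rfl

lemma rhoC_iter_zero (m : ℕ) (h : Fin k) :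
    (rhoC)^[m] ((h, 0) : Fin k × ZMod n) = (h - (m : Fin k), 0) := by
  induction m with
  | zero => simp
  | succ m ih =>
    rw [Function.iterate_succ_apply', ih, rhoC_apply, if_pos rfl]
    have hc : ((m+1 : ℕ) : Fin k) = (m : Fin k) + 1 := by push_cast; ring
    rw [hc]
    exact Prod.ext (by ring) rfl

end Defs


section Core

variable [NeZero n] [NeZero k]

def Nrow (A : ZMod n → ZMod n → ℤ) (g : Fin k → ℕ) (a : ZMod n) (h : Fin k) : ℤ :=
  ∑ x ∈ Finset.range ((a - (g h : ZMod n)).val + 1), A a ((x : ℕ) : ZMod n)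

def Ncol (A : ZMod n → ZMod n → ℤ) (g : Fin k → ℕ) (b : ZMod n) (h : Fin k) : ℤ :=
  ∑ x ∈ Finset.range ((b + (g h : ZMod n)).val + 1), A ((x : ℕ) : ZMod n) b

lemma sum_range_univ (f : ZMod n → ℤ) :
    ∑ x ∈ Finset.range n, f ((x : ℕ) : ZMod n) = ∑ x : ZMod n, f x := by
  rw [← Fin.sum_univ_eq_sum_range (fun i => f ((i : ℕ) : ZMod n)) n]
  refine Fintype.sum_bijective (fun i : Fin n => ((i : ℕ) : ZMod n)) ⟨?_, ?_⟩ _ _ (fun i => rfl)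
  · intro a b hab
    simp only at hab
    have h2 := congrArg ZMod.val hab
    rw [ZMod.val_cast_of_lt a.isLt, ZMod.val_cast_of_lt b.isLt] at h2
    exact Fin.ext h2
  · intro x
    exact ⟨⟨x.val, ZMod.val_lt x⟩, ZMod.natCast_rightInverse x⟩

variable {g : Fin k → ℕ} {A : ZMod n → ZMod n → ℤ} {M : ℤ}

lemma rowZeros (hmono : StrictMono g) (hgn : ∀ h, g h < n) (h2 : 2 ≤ k)
    (hfill : ∀ a b : ZMod n, A a b ≠ 0 ↔ ∃ h : Fin k, a - b = (g h : ZMod n))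
    (a : ZMod n) (h : Fin k) (x : ℕ) (hx : x < n)
    (hbet : ((a - ((g (h+1) : ZMod n))).val < x ∧ x < (a - (g h : ZMod n)).val) ∨
      ((a - (g h : ZMod n)).val < (a - ((g (h+1) : ZMod n))).val ∧
        ((a - ((g (h+1) : ZMod n))).val < x ∨ x < (a - (g h : ZMod n)).val))) :
    A a ((x : ℕ) : ZMod n) = 0 := by
  set c1 := (a - ((g (h+1) : ZMod n))).val with hc1
  set c2 := (a - (g h : ZMod n)).val with hc2
  by_contra hnz
  obtain ⟨j, hj⟩ := (hfill a ((x : ℕ) : ZMod n)).mp hnz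
  -- x = (a - d j).val
  have hxval : ((x : ℕ) : ZMod n) = a - (g j : ZMod n) := by
    rw [← hj]; ring
  have hxv : x = (a - (g j : ZMod n)).val := by
    rw [← hxval, ZMod.val_cast_of_lt hx]
  have hcast : ∀ h' : Fin k, ((((a - (g h' : ZMod n)).val : ℕ)) : ZMod n) = a - (g h' : ZMod n) :=
    fun h' => ZMod.natCast_rightInverse _
  have hc1n : c1 < n := ZMod.val_lt _
  have hc2n : c2 < n := ZMod.val_lt _
  -- identity : d(h+1) - d j = (x cast) - (c1 cast)
  have key : ∀ j' : Fin k,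
      ((g (h+1) : ZMod n) - (g j' : ZMod n)).val
        = (( ((a - (g j' : ZMod n)).val : ℕ) : ZMod n) - ((c1 : ℕ) : ZMod n)).val := by
    intro j'
    congr 1
    rw [hcast j', hc1, hcast (h+1)]
    ring
  by_cases hjh : j = h
  · rw [hjh] at hxv
    omega
  by_cases hjh1 : j = h + 1
  · rw [hjh1] at hxv
    omega
  · have hclaim := claimA hmono hgn h2 h j hjh hjh1
    rw [key j, key h] at hclaim
    rw [← hxv] at hclaim
    rw [valSubNat x c1 hx hc1n] at hclaim
    rw [valSubNat c2 c1 hc2n hc1n] at hclaim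
    split_ifs at hclaim <;> omega

lemma colZeros (hmono : StrictMono g) (hgn : ∀ h, g h < n) (h2 : 2 ≤ k)
    (hfill : ∀ a b : ZMod n, A a b ≠ 0 ↔ ∃ h : Fin k, a - b = (g h : ZMod n))
    (b : ZMod n) (h : Fin k) (x : ℕ) (hx : x < n)
    (hbet : ((b + (g h : ZMod n)).val < x ∧ x < (b + (g (h+1) : ZMod n)).val) ∨
      ((b + (g (h+1) : ZMod n)).val < (b + (g h : ZMod n)).val ∧
        ((b + (g h : ZMod n)).val < x ∨ x < (b + (g (h+1) : ZMod n)).val))) :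
    A ((x : ℕ) : ZMod n) b = 0 := by
  set c1 := (b + (g h : ZMod n)).val with hc1
  set c2 := (b + (g (h+1) : ZMod n)).val with hc2
  by_contra hnz
  obtain ⟨j, hj⟩ := (hfill ((x : ℕ) : ZMod n) b).mp hnz
  have hxval : ((x : ℕ) : ZMod n) = b + (g j : ZMod n) := by
    rw [← hj]; ring
  have hxv : x = (b + (g j : ZMod n)).val := by
    rw [← hxval, ZMod.val_cast_of_lt hx]
  have hcast : ∀ h' : Fin k, ((((b + (g h' : ZMod n)).val : ℕ)) : ZMod n) = b + (g h' : ZMod n) :=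
    fun h' => ZMod.natCast_rightInverse _
  have hc1n : c1 < n := ZMod.val_lt _
  have hc2n : c2 < n := ZMod.val_lt _
  have key : ∀ j' : Fin k,
      ((g j' : ZMod n) - (g h : ZMod n)).val
        = (( ((b + (g j' : ZMod n)).val : ℕ) : ZMod n) - ((c1 : ℕ) : ZMod n)).val := by
    intro j'
    congr 1
    rw [hcast j', hc1, hcast h]
    ring
  by_cases hjh : j = h
  · rw [hjh] at hxv
    omega
  by_cases hjh1 : j = h + 1
  · rw [hjh1] at hxv
    omega
  · have hclaim := claimB hmono hgn h2 h j hjh hjh1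
    rw [key j, key (h+1)] at hclaim
    rw [← hxv] at hclaim
    rw [valSubNat x c1 hx hc1n] at hclaim
    rw [valSubNat c2 c1 hc2n hc1n] at hclaim
    split_ifs at hclaim <;> omega

end Core

section BLemmas

variable [NeZero n] [NeZero k] {g : Fin k → ℕ} {A : ZMod n → ZMod n → ℤ} {M : ℤ}

lemma hne_succ (h2 : 2 ≤ k) (h : Fin k) : h ≠ h + 1 := by
  intro e
  have hv := congrArg Fin.val e
  rw [finValAddOne h2 h] at hv
  have := h.isLt
  split_ifs at hv <;> omega

lemma rowB (hmono : StrictMono g) (hgn : ∀ h, g h < n) (h2 : 2 ≤ k)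
    (hfill : ∀ a b : ZMod n, A a b ≠ 0 ↔ ∃ h : Fin k, a - b = (g h : ZMod n))
    (a : ZMod n) (hrow : (∑ b : ZMod n, A a b) ≡ 0 [ZMOD M]) (h : Fin k) :
    A a (a - (g h : ZMod n)) ≡ Nrow A g a h - Nrow A g a (h+1) [ZMOD M] := by
  set c1 := (a - ((g (h+1) : ZMod n))).val with hc1
  set c2 := (a - (g h : ZMod n)).val with hc2
  have hc1n : c1 < n := ZMod.val_lt _
  have hc2n : c2 < n := ZMod.val_lt _
  have hAc2 : A a ((c2 : ℕ) : ZMod n) = A a (a - (g h : ZMod n)) := by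
    rw [hc2, ZMod.natCast_rightInverse]
  have hcc : c1 ≠ c2 := by
    intro e
    have e2 : a - ((g (h+1) : ZMod n)) = a - (g h : ZMod n) := by
      have t1 := ZMod.natCast_rightInverse (n := n) (a - ((g (h+1) : ZMod n)))
      have t2 := ZMod.natCast_rightInverse (n := n) (a - (g h : ZMod n))
      rw [← t1, ← t2, ← hc1, ← hc2, e]
    have e3 : ((g (h+1) : ZMod n)) = (g h : ZMod n) := sub_right_injective e2
    exact (hne_succ h2 h) (dInj hmono hgn e3).symm
  rcases Nat.lt_or_ge c1 c2 with hlt | hge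
  · -- no wrap : Nrow h - Nrow (h+1) = A a c2
    have hsub : Nrow A g a h - Nrow A g a (h+1)
        = ∑ x ∈ Finset.Ico (c1+1) (c2+1), A a ((x : ℕ) : ZMod n) := by
      rw [Nrow, Nrow, ← hc1, ← hc2, Finset.sum_Ico_eq_sub _ (by omega)]
    have htop : ∑ x ∈ Finset.Ico (c1+1) (c2+1), A a ((x : ℕ) : ZMod n)
        = (∑ x ∈ Finset.Ico (c1+1) c2, A a ((x : ℕ) : ZMod n)) + A a ((c2 : ℕ) : ZMod n) := by
      rw [Finset.sum_Ico_succ_top (by omega)]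
    have hz : ∑ x ∈ Finset.Ico (c1+1) c2, A a ((x : ℕ) : ZMod n) = 0 := by
      apply Finset.sum_eq_zero
      intro x hx
      rw [Finset.mem_Ico] at hx
      exact rowZeros hmono hgn h2 hfill a h x (by omega) (Or.inl ⟨by omega, by omega⟩)
    rw [hsub, htop, hz, hAc2, zero_add]
  · have hgt : c2 < c1 := by omega
    -- wrap case
    have hN2 : Nrow A g a h = A a ((c2:ℕ) : ZMod n) := by
      rw [Nrow, ← hc2, Finset.sum_range_succ]
      have : ∑ x ∈ Finset.range c2, A a ((x : ℕ) : ZMod n) = 0 := by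
        apply Finset.sum_eq_zero
        intro x hx
        rw [Finset.mem_range] at hx
        exact rowZeros hmono hgn h2 hfill a h x (by omega) (Or.inr ⟨hgt, Or.inr hx⟩)
      rw [this, zero_add]
    have hN1 : Nrow A g a (h+1) = ∑ x ∈ Finset.range n, A a ((x : ℕ) : ZMod n) := by
      rw [Nrow, ← hc1]
      have hsplit : ∑ x ∈ Finset.range n, A a ((x : ℕ) : ZMod n)
          = (∑ x ∈ Finset.range (c1+1), A a ((x : ℕ) : ZMod n))
            + ∑ x ∈ Finset.Ico (c1+1) n, A a ((x : ℕ) : ZMod n) := by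
        rw [Finset.range_eq_Ico, Finset.range_eq_Ico]
        exact (Finset.sum_Ico_consecutive (fun x : ℕ => A a ((x : ℕ) : ZMod n)) (by omega : 0 ≤ c1+1) (by omega : c1+1 ≤ n)).symm
      have hz : ∑ x ∈ Finset.Ico (c1+1) n, A a ((x : ℕ) : ZMod n) = 0 := by
        apply Finset.sum_eq_zero
        intro x hx
        rw [Finset.mem_Ico] at hx
        exact rowZeros hmono hgn h2 hfill a h x (by omega) (Or.inr ⟨hgt, Or.inl (by omega)⟩)
      rw [hsplit, hz, add_zero]
    have hT : (∑ x ∈ Finset.range n, A a ((x : ℕ) : ZMod n)) ≡ 0 [ZMOD M] := by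
      rw [sum_range_univ]; exact hrow
    rw [hN2, hN1, hAc2]
    calc A a (a - (g h : ZMod n))
        = A a (a - (g h : ZMod n)) - 0 := by ring
      _ ≡ A a (a - (g h : ZMod n)) - ∑ x ∈ Finset.range n, A a ((x : ℕ) : ZMod n) [ZMOD M] :=
        (Int.ModEq.refl _).sub hT.symm

lemma colB (hmono : StrictMono g) (hgn : ∀ h, g h < n) (h2 : 2 ≤ k)
    (hfill : ∀ a b : ZMod n, A a b ≠ 0 ↔ ∃ h : Fin k, a - b = (g h : ZMod n))
    (b : ZMod n) (hcol : (∑ a : ZMod n, A a b) ≡ 0 [ZMOD M]) (h : Fin k) :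
    A (b + (g (h+1) : ZMod n)) b ≡ Ncol A g b (h+1) - Ncol A g b h [ZMOD M] := by
  set c1 := (b + (g h : ZMod n)).val with hc1
  set c2 := (b + (g (h+1) : ZMod n)).val with hc2
  have hc1n : c1 < n := ZMod.val_lt _
  have hc2n : c2 < n := ZMod.val_lt _
  have hAc2 : A ((c2 : ℕ) : ZMod n) b = A (b + (g (h+1) : ZMod n)) b := by
    rw [hc2, ZMod.natCast_rightInverse]
  have hcc : c1 ≠ c2 := by
    intro e
    have e2 : b + (g h : ZMod n) = b + ((g (h+1) : ZMod n)) := by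
      have t1 := ZMod.natCast_rightInverse (n := n) (b + (g h : ZMod n))
      have t2 := ZMod.natCast_rightInverse (n := n) (b + ((g (h+1) : ZMod n)))
      rw [← t1, ← t2, ← hc1, ← hc2, e]
    have e3 : (g h : ZMod n) = ((g (h+1) : ZMod n)) := add_left_cancel e2
    exact (hne_succ h2 h) (dInj hmono hgn e3)
  rcases Nat.lt_or_ge c1 c2 with hlt | hge
  · have hsub : Ncol A g b (h+1) - Ncol A g b h
        = ∑ x ∈ Finset.Ico (c1+1) (c2+1), A ((x : ℕ) : ZMod n) b := by
      rw [Ncol, Ncol, ← hc1, ← hc2, Finset.sum_Ico_eq_sub _ (by omega)]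
    have htop : ∑ x ∈ Finset.Ico (c1+1) (c2+1), A ((x : ℕ) : ZMod n) b
        = (∑ x ∈ Finset.Ico (c1+1) c2, A ((x : ℕ) : ZMod n) b) + A ((c2 : ℕ) : ZMod n) b := by
      rw [Finset.sum_Ico_succ_top (by omega)]
    have hz : ∑ x ∈ Finset.Ico (c1+1) c2, A ((x : ℕ) : ZMod n) b = 0 := by
      apply Finset.sum_eq_zero
      intro x hx
      rw [Finset.mem_Ico] at hx
      exact colZeros hmono hgn h2 hfill b h x (by omega) (Or.inl ⟨by omega, by omega⟩)
    rw [hsub, htop, hz, hAc2, zero_add]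
  · have hgt : c2 < c1 := by omega
    have hN2 : Ncol A g b (h+1) = A ((c2:ℕ) : ZMod n) b := by
      rw [Ncol, ← hc2, Finset.sum_range_succ]
      have : ∑ x ∈ Finset.range c2, A ((x : ℕ) : ZMod n) b = 0 := by
        apply Finset.sum_eq_zero
        intro x hx
        rw [Finset.mem_range] at hx
        exact colZeros hmono hgn h2 hfill b h x (by omega) (Or.inr ⟨hgt, Or.inr hx⟩)
      rw [this, zero_add]
    have hN1 : Ncol A g b h = ∑ x ∈ Finset.range n, A ((x : ℕ) : ZMod n) b := by
      rw [Ncol, ← hc1]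
      have hsplit : ∑ x ∈ Finset.range n, A ((x : ℕ) : ZMod n) b
          = (∑ x ∈ Finset.range (c1+1), A ((x : ℕ) : ZMod n) b)
            + ∑ x ∈ Finset.Ico (c1+1) n, A ((x : ℕ) : ZMod n) b := by
        rw [Finset.range_eq_Ico, Finset.range_eq_Ico]
        exact (Finset.sum_Ico_consecutive (fun x : ℕ => A ((x : ℕ) : ZMod n) b) (by omega : 0 ≤ c1+1) (by omega : c1+1 ≤ n)).symm
      have hz : ∑ x ∈ Finset.Ico (c1+1) n, A ((x : ℕ) : ZMod n) b = 0 := by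
        apply Finset.sum_eq_zero
        intro x hx
        rw [Finset.mem_Ico] at hx
        exact colZeros hmono hgn h2 hfill b h x (by omega) (Or.inr ⟨hgt, Or.inl (by omega)⟩)
      rw [hsplit, hz, add_zero]
    have hT : (∑ x ∈ Finset.range n, A ((x : ℕ) : ZMod n) b) ≡ 0 [ZMOD M] := by
      rw [sum_range_univ (fun z => A z b)]; exact hcol
    rw [hN2, hN1, hAc2]
    calc A (b + (g (h+1) : ZMod n)) b
        = A (b + (g (h+1) : ZMod n)) b - 0 := by ring
      _ ≡ A (b + (g (h+1) : ZMod n)) b - ∑ x ∈ Finset.range n, A ((x : ℕ) : ZMod n) b [ZMOD M] :=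
        (Int.ModEq.refl _).sub hT.symm

end BLemmas

section Tele

variable [NeZero n] [NeZero k] {g : Fin k → ℕ} {A : ZMod n → ZMod n → ℤ} {M : ℤ}

lemma teleRow (a : ZMod n) (h : Fin k)
    (hB : ∀ j : Fin k, A a (a - (g j : ZMod n)) ≡ Nrow A g a j - Nrow A g a (j+1) [ZMOD M]) :
    ∀ t : ℕ, (∑ j ∈ Finset.range (t+1), A a (a - (g (h - (j : ℕ)) : ZMod n)))
      ≡ Nrow A g a (h - (t : ℕ)) - Nrow A g a (h+1) [ZMOD M] := by
  intro t
  induction t with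
  | zero =>
    simpa using hB h
  | succ t ih =>
    rw [Finset.sum_range_succ]
    have hc : ((t+1 : ℕ) : Fin k) = (t : ℕ) + 1 := by push_cast; ring
    have hkey : (h - ((t : ℕ) + 1)) + 1 = h - (t : ℕ) := by ring
    have hB' := hB (h - ((t+1 : ℕ) : Fin k))
    rw [hc, hkey] at hB'
    have hsum := ih.add hB'
    have e : (Nrow A g a (h - (t:ℕ)) - Nrow A g a (h+1))
        + (Nrow A g a (h - ((t:ℕ)+1)) - Nrow A g a (h - (t:ℕ)))
        = Nrow A g a (h - ((t:ℕ)+1)) - Nrow A g a (h+1) := by ring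
    rw [e] at hsum
    rw [hc]
    exact hsum

lemma teleColUp (b : ZMod n) (h : Fin k)
    (hB : ∀ j : Fin k, A (b + (g j : ZMod n)) b ≡ Ncol A g b j - Ncol A g b (j-1) [ZMOD M]) :
    ∀ t : ℕ, (∑ j ∈ Finset.range (t+1), A (b + (g (h + (j : ℕ)) : ZMod n)) b)
      ≡ Ncol A g b (h + (t : ℕ)) - Ncol A g b (h - 1) [ZMOD M] := by
  intro t
  induction t with
  | zero =>
    simpa using hB h
  | succ t ih =>
    rw [Finset.sum_range_succ]
    have hc : ((t+1 : ℕ) : Fin k) = (t : ℕ) + 1 := by push_cast; ring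
    have hkey : (h + ((t : ℕ) + 1)) - 1 = h + (t : ℕ) := by ring
    have hB' := hB (h + ((t+1 : ℕ) : Fin k))
    rw [hc, hkey] at hB'
    have hsum := ih.add hB'
    have e : (Ncol A g b (h + (t:ℕ)) - Ncol A g b (h - 1))
        + (Ncol A g b (h + ((t:ℕ)+1)) - Ncol A g b (h + (t:ℕ)))
        = Ncol A g b (h + ((t:ℕ)+1)) - Ncol A g b (h - 1) := by ring
    rw [e] at hsum
    rw [hc]
    exact hsum

lemma teleColDown (b : ZMod n) (h : Fin k)
    (hB : ∀ j : Fin k, A (b + (g j : ZMod n)) b ≡ Ncol A g b j - Ncol A g b (j-1) [ZMOD M]) :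
    ∀ t : ℕ, (∑ j ∈ Finset.range (t+1), A (b + (g (h - (j : ℕ)) : ZMod n)) b)
      ≡ Ncol A g b h - Ncol A g b (h - (t : ℕ) - 1) [ZMOD M] := by
  intro t
  induction t with
  | zero =>
    simpa using hB h
  | succ t ih =>
    rw [Finset.sum_range_succ]
    have hc : ((t+1 : ℕ) : Fin k) = (t : ℕ) + 1 := by push_cast; ring
    have hB' := hB (h - ((t+1 : ℕ) : Fin k))
    rw [hc] at hB'
    have hsum := ih.add hB'
    have e : (Ncol A g b h - Ncol A g b (h - (t:ℕ) - 1))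
        + (Ncol A g b (h - ((t:ℕ)+1)) - Ncol A g b ((h - ((t:ℕ)+1)) - 1))
        = Ncol A g b h - Ncol A g b (h - ((t:ℕ)+1) - 1) := by
      have : h - ((t:ℕ)+1) = h - (t:ℕ) - 1 := by ring
      rw [this]; ring
    rw [e] at hsum
    rw [hc]
    exact hsum

lemma rowNinj (hmono : StrictMono g) (hgn : ∀ h, g h < n)
    (hfill : ∀ a b : ZMod n, A a b ≠ 0 ↔ ∃ h : Fin k, a - b = (g h : ZMod n))
    (hgs1 : ∀ a : ZMod n, ∀ t₁ < n, ∀ t₂ < n,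
      A a (t₁ : ZMod n) ≠ 0 → A a (t₂ : ZMod n) ≠ 0 →
      (∑ x ∈ Finset.range (t₁ + 1), A a (x : ZMod n)) ≡
        (∑ x ∈ Finset.range (t₂ + 1), A a (x : ZMod n)) [ZMOD M] → t₁ = t₂)
    (a : ZMod n) (h h' : Fin k)
    (hmod : Nrow A g a h ≡ Nrow A g a h' [ZMOD M]) : h = h' := by
  have hnz : ∀ j : Fin k, A a ((((a - (g j : ZMod n)).val : ℕ)) : ZMod n) ≠ 0 := by
    intro j
    rw [ZMod.natCast_rightInverse]
    exact (hfill a (a - (g j : ZMod n))).mpr ⟨j, by ring⟩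
  have := hgs1 a (a - (g h : ZMod n)).val (ZMod.val_lt _) (a - (g h' : ZMod n)).val
    (ZMod.val_lt _) (hnz h) (hnz h') hmod
  have e2 : a - (g h : ZMod n) = a - (g h' : ZMod n) := by
    have t1 := ZMod.natCast_rightInverse (n := n) (a - (g h : ZMod n))
    have t2 := ZMod.natCast_rightInverse (n := n) (a - (g h' : ZMod n))
    rw [← t1, ← t2, this]
  exact dInj hmono hgn (sub_right_injective e2)

lemma colNinj (hmono : StrictMono g) (hgn : ∀ h, g h < n)
    (hfill : ∀ a b : ZMod n, A a b ≠ 0 ↔ ∃ h : Fin k, a - b = (g h : ZMod n))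
    (hgs2 : ∀ b : ZMod n, ∀ t₁ < n, ∀ t₂ < n,
      A (t₁ : ZMod n) b ≠ 0 → A (t₂ : ZMod n) b ≠ 0 →
      (∑ x ∈ Finset.range (t₁ + 1), A (x : ZMod n) b) ≡
        (∑ x ∈ Finset.range (t₂ + 1), A (x : ZMod n) b) [ZMOD M] → t₁ = t₂)
    (b : ZMod n) (h h' : Fin k)
    (hmod : Ncol A g b h ≡ Ncol A g b h' [ZMOD M]) : h = h' := by
  have hnz : ∀ j : Fin k, A ((((b + (g j : ZMod n)).val : ℕ)) : ZMod n) b ≠ 0 := by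
    intro j
    rw [ZMod.natCast_rightInverse]
    exact (hfill (b + (g j : ZMod n)) b).mpr ⟨j, by ring⟩
  have := hgs2 b (b + (g h : ZMod n)).val (ZMod.val_lt _) (b + (g h' : ZMod n)).val
    (ZMod.val_lt _) (hnz h) (hnz h') hmod
  have e2 : b + (g h : ZMod n) = b + (g h' : ZMod n) := by
    have t1 := ZMod.natCast_rightInverse (n := n) (b + (g h : ZMod n))
    have t2 := ZMod.natCast_rightInverse (n := n) (b + (g h' : ZMod n))
    rw [← t1, ← t2, this]
  exact dInj hmono hgn (add_left_cancel e2)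

end Tele

section Misc

lemma perm_pow_conj {α β : Type*} (σ : Equiv.Perm β) (F : α → β) (ρ : α → α)
    (hc : ∀ x, σ (F x) = F (ρ x)) : ∀ (m : ℕ) (x : α), (σ ^ m) (F x) = F (ρ^[m] x) := by
  intro m
  induction m with
  | zero => intro x; simp
  | succ m ih =>
    intro x
    rw [pow_succ, Equiv.Perm.mul_apply, hc, ih, ← Function.iterate_succ_apply]

lemma sUnit [NeZero n] {x : ℤ} (hg : Int.gcd (n : ℤ) x = 1) : IsUnit ((x : ℤ) : ZMod n) := by
  have hc : Nat.Coprime x.natAbs n := by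
    have : Nat.gcd n x.natAbs = 1 := by
      rw [Int.gcd] at hg
      simpa using hg
    exact Nat.coprime_comm.mp this
  have hu : IsUnit ((x.natAbs : ℕ) : ZMod n) := (ZMod.isUnit_iff_coprime _ n).mpr hc
  rcases Int.natAbs_eq x with he | he
  · rw [he, Int.cast_natCast]; exact hu
  · rw [he, Int.cast_neg, Int.cast_natCast]; exact hu.neg

end Misc

end Heffter

open Heffter in
theorem statement1 (n k : ℕ) [NeZero n] [NeZero k] (hk : Odd k)
    (A : ZMod n → ZMod n → ℤ) (hA : IsHeffterSq n k A)
    (g : Fin k → ℕ) (hmono : StrictMono g) (hgn : ∀ h, g h < n)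
    (hfill : ∀ a b : ZMod n, A a b ≠ 0 ↔ ∃ h : Fin k, a - b = (g h : ZMod n))
    (hgcd : ∀ h : Fin k, Int.gcd (n : ℤ) ((g h : ℤ) - (g (h - 1) : ℤ)) = 1)
    (hgs : NatOrdSimple n (2 * n * k + 1) A) :
    ∃ ωr ωc : Equiv.Perm (ZMod n × ZMod n),
      IsRowOrdSq n A ωr ∧ IsColOrdSq n A ωc ∧
      OrdSimple n k A ωr ∧ OrdSimple n k A ωc ∧ CompatibleSq n A ωr ωc := by
  classical
  obtain ⟨hA1, hA2, hA3, hA4, hA5, hA6⟩ := hA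
  -- k ≥ 2
  have hk2 : 2 ≤ k := by
    rcases Nat.lt_or_ge k 2 with hlt | hge
    · exfalso
      have hk1 : k = 1 := by have := NeZero.ne k; omega
      subst hk1
      obtain ⟨b, hb⟩ := Finset.card_eq_one.mp (hA1 0)
      have hmem : b ∈ Finset.univ.filter (fun b => A 0 b ≠ 0) := by
        rw [hb]; exact Finset.mem_singleton_self b
      have hbnz : A 0 b ≠ 0 := (Finset.mem_filter.mp hmem).2
      have hz : ∀ b', b' ≠ b → A 0 b' = 0 := by
        intro b' hne
        by_contra hnz
        have : b' ∈ ({b} : Finset (ZMod n)) := by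
          rw [← hb]; exact Finset.mem_filter.mpr ⟨Finset.mem_univ _, hnz⟩
        exact hne (Finset.mem_singleton.mp this)
      have hsum : (∑ b' : ZMod n, A 0 b') = A 0 b := Fintype.sum_eq_single b hz
      have hrow := hA3 0
      rw [hsum] at hrow
      have hdvd : (2 * (n:ℤ) * ((1:ℕ):ℤ) + 1) ∣ A 0 b := Int.modEq_zero_iff_dvd.mp hrow
      have hmemI := hA5 0 b hbnz
      rw [Finset.mem_Icc] at hmemI
      apply hbnz
      apply Int.eq_zero_of_dvd_of_natAbs_lt_natAbs hdvd
      have he : (2 * (n:ℤ) * ((1:ℕ):ℤ) + 1) = ((2*n+1 : ℕ) : ℤ) := by push_cast; ring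
      rw [he, Int.natAbs_natCast]
      omega
    · exact hge
  have hd : Function.Injective (fun h : Fin k => (g h : ZMod n)) := dInj hmono hgn
  letI : DecidablePred (pFill (n := n) g) := Classical.decPred _
  set f : (Fin k × ZMod n) ≃ {c : ZMod n × ZMod n // pFill g c} := feq g hd with hf
  set ωr : Equiv.Perm (ZMod n × ZMod n) := Equiv.Perm.extendDomain (rhoR g) f with hωr
  set ωc : Equiv.Perm (ZMod n × ZMod n) := Equiv.Perm.extendDomain rhoC f with hωc
  have hωr_img : ∀ x, ωr (Fcell g x) = Fcell g (rhoR g x) := by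
    intro x
    exact Equiv.Perm.extendDomain_apply_image (rhoR g) f x
  have hωc_img : ∀ x, ωc (Fcell g x) = Fcell g (rhoC x) := by
    intro x
    exact Equiv.Perm.extendDomain_apply_image rhoC f x
  have hωr_fix : ∀ c, ¬ pFill g c → ωr c = c :=
    fun c hc => Equiv.Perm.extendDomain_apply_not_subtype _ f hc
  have hωc_fix : ∀ c, ¬ pFill g c → ωc c = c :=
    fun c hc => Equiv.Perm.extendDomain_apply_not_subtype _ f hc
  have hsurj : ∀ c : ZMod n × ZMod n, pFill g c → ∃ x : Fin k × ZMod n, Fcell g x = c := by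
    intro c hc
    obtain ⟨x, hx⟩ := (feq g hd).surjective ⟨c, hc⟩
    exact ⟨x, congrArg Subtype.val hx⟩
  refine ⟨ωr, ωc, ?_, ?_, ?_, ?_, ?_⟩
  · -- IsRowOrdSq
    refine ⟨?_, ?_, ?_⟩
    · intro c
      by_cases hc : pFill g c
      · obtain ⟨x, rfl⟩ := hsurj c hc
        obtain ⟨h, i⟩ := x
        rw [hωr_img, rhoR_apply]
        show (i + (g h : ZMod n) - (g (h-1) : ZMod n)) + (g (h-1) : ZMod n) = i + (g h : ZMod n)
        ring
      · rw [hωr_fix c hc]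
    · intro c hc0
      exact hωr_fix c (fun hp => (hfill c.1 c.2).mpr hp hc0)
    · intro c c' hcc hcne hcne'
      obtain ⟨x, rfl⟩ := hsurj c ((hfill _ _).mp hcne)
      obtain ⟨y, rfl⟩ := hsurj c' ((hfill _ _).mp hcne')
      obtain ⟨h, i⟩ := x; obtain ⟨h', i'⟩ := y
      refine ⟨(h - h').val, ?_⟩
      rw [perm_pow_conj ωr (Fcell g) _ hωr_img, rhoR_iter, Fin.cast_val_eq_self]
      have e1 : h - (h - h') = h' := by ring
      rw [e1]
      have hcc' : i + (g h : ZMod n) = i' + (g h' : ZMod n) := hcc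
      have e2 : i + (g h : ZMod n) - (g h' : ZMod n) = i' := by rw [hcc']; ring
      rw [e2]
  · -- IsColOrdSq
    refine ⟨?_, ?_, ?_⟩
    · intro c
      by_cases hc : pFill g c
      · obtain ⟨x, rfl⟩ := hsurj c hc
        obtain ⟨h, i⟩ := x
        rw [hωc_img, rhoC_apply]
        rfl
      · rw [hωc_fix c hc]
    · intro c hc0
      exact hωc_fix c (fun hp => (hfill c.1 c.2).mpr hp hc0)
    · intro c c' hcc hcne hcne'
      obtain ⟨x, rfl⟩ := hsurj c ((hfill _ _).mp hcne)
      obtain ⟨y, rfl⟩ := hsurj c' ((hfill _ _).mp hcne')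
      obtain ⟨h, i⟩ := x; obtain ⟨h', i'⟩ := y
      have hii : i = i' := hcc
      subst hii
      by_cases hi : i = 0
      · subst hi
        refine ⟨(h - h').val, ?_⟩
        rw [perm_pow_conj ωc (Fcell g) _ hωc_img, rhoC_iter_zero, Fin.cast_val_eq_self]
        have e1 : h - (h - h') = h' := by ring
        rw [e1]
      · refine ⟨(h' - h).val, ?_⟩
        rw [perm_pow_conj ωc (Fcell g) _ hωc_img, rhoC_iter_ne _ _ _ hi, Fin.cast_val_eq_self]
        have e1 : h + (h' - h) = h' := by ring
        rw [e1]
  · -- OrdSimple ωr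
    intro c hc t₁ ht₁ t₂ ht₂ hmod
    obtain ⟨x, rfl⟩ := hsurj c ((hfill _ _).mp hc)
    obtain ⟨h, i⟩ := x
    set a : ZMod n := i + (g h : ZMod n) with ha
    have hterm : ∀ j : ℕ,
        A (((ωr ^ j) (Fcell g (h, i))).1) (((ωr ^ j) (Fcell g (h, i))).2)
          = A a (a - (g (h - (j : ℕ)) : ZMod n)) := by
      intro j
      rw [perm_pow_conj ωr (Fcell g) _ hωr_img, rhoR_iter]
      have e1 : (i + (g h : ZMod n) - (g (h - (j:ℕ)) : ZMod n)) + (g (h - (j:ℕ)) : ZMod n)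
          = a := by rw [ha]; try ring
      have e2 : i + (g h : ZMod n) - (g (h - (j:ℕ)) : ZMod n)
          = a - (g (h - (j:ℕ)) : ZMod n) := by rw [ha]; try ring
      show A ((i + (g h : ZMod n) - (g (h - (j:ℕ)) : ZMod n)) + (g (h - (j:ℕ)) : ZMod n))
        (i + (g h : ZMod n) - (g (h - (j:ℕ)) : ZMod n)) = _
      rw [e1, e2]
    have hsums : ∀ t : ℕ,
        (∑ j ∈ Finset.range (t+1),
          A (((ωr ^ j) (Fcell g (h, i))).1) (((ωr ^ j) (Fcell g (h, i))).2))
        = ∑ j ∈ Finset.range (t+1), A a (a - (g (h - (j : ℕ)) : ZMod n)) :=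
      fun t => Finset.sum_congr rfl (fun j _ => hterm j)
    rw [hsums t₁, hsums t₂] at hmod
    have hBr : ∀ j : Fin k, A a (a - (g j : ZMod n))
        ≡ Nrow A g a j - Nrow A g a (j+1) [ZMOD (2 * n * k + 1)] :=
      fun j => rowB hmono hgn hk2 hfill a (hA3 a) j
    have h1 := teleRow a h hBr t₁
    have h2 := teleRow a h hBr t₂
    have h3 : Nrow A g a (h - (t₁:ℕ)) ≡ Nrow A g a (h - (t₂:ℕ)) [ZMOD (2 * n * k + 1)] := by
      have h4 := ((h1.symm.trans hmod).trans h2).add_right (Nrow A g a (h+1))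
      simpa using h4
    have h5 := rowNinj hmono hgn hfill hgs.1 a _ _ h3
    have h6 : ((t₁ : ℕ) : Fin k) = ((t₂ : ℕ) : Fin k) := sub_right_injective h5
    have h7 := congrArg Fin.val h6
    rw [Fin.val_natCast, Fin.val_natCast, Nat.mod_eq_of_lt ht₁, Nat.mod_eq_of_lt ht₂] at h7
    exact h7
  · -- OrdSimple ωc
    intro c hc t₁ ht₁ t₂ ht₂ hmod
    obtain ⟨x, rfl⟩ := hsurj c ((hfill _ _).mp hc)
    obtain ⟨h, i⟩ := x
    have hBc : ∀ j : Fin k, A (i + (g j : ZMod n)) i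
        ≡ Ncol A g i j - Ncol A g i (j-1) [ZMOD (2 * n * k + 1)] := by
      intro j
      have := colB hmono hgn hk2 hfill i (hA4 i) (j - 1)
      rwa [sub_add_cancel] at this
    by_cases hi : i = 0
    · subst hi
      have hterm : ∀ j : ℕ,
          A (((ωc ^ j) (Fcell g (h, (0:ZMod n)))).1) (((ωc ^ j) (Fcell g (h, (0:ZMod n)))).2)
            = A ((0:ZMod n) + (g (h - (j : ℕ)) : ZMod n)) (0:ZMod n) := by
        intro j
        rw [perm_pow_conj ωc (Fcell g) _ hωc_img, rhoC_iter_zero]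
        rfl
      have hsums : ∀ t : ℕ,
          (∑ j ∈ Finset.range (t+1),
            A (((ωc ^ j) (Fcell g (h, (0:ZMod n)))).1) (((ωc ^ j) (Fcell g (h, (0:ZMod n)))).2))
          = ∑ j ∈ Finset.range (t+1), A ((0:ZMod n) + (g (h - (j : ℕ)) : ZMod n)) (0:ZMod n) :=
        fun t => Finset.sum_congr rfl (fun j _ => hterm j)
      rw [hsums t₁, hsums t₂] at hmod
      have h1 := teleColDown (0:ZMod n) h hBc t₁
      have h2 := teleColDown (0:ZMod n) h hBc t₂
      have h3 : Ncol A g 0 (h - (t₁:ℕ) - 1) ≡ Ncol A g 0 (h - (t₂:ℕ) - 1) [ZMOD (2 * n * k + 1)] := by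
        have h4 := ((h1.symm.trans hmod).trans h2).symm.add_left (Ncol A g 0 h)
        -- h4 : Ncol h - (Ncol h - X) ≡ ... rearrange
        have e1 : ∀ X : ℤ, Ncol A g (0:ZMod n) h + (Ncol A g (0:ZMod n) h - X) = 2*Ncol A g (0:ZMod n) h - X := by intro X; ring
        -- simpler: from subtracted congruence
        have h5 := ((h1.symm.trans hmod).trans h2)
        -- h5 : Ncol h - Ncol (h - t₁ - 1) ≡ Ncol h - Ncol (h - t₂ - 1)
        have h6 := (Int.ModEq.refl (Ncol A g (0:ZMod n) h)).sub h5
        simpa using h6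
      have h5 := colNinj hmono hgn hfill hgs.2 0 _ _ h3
      have h6 : h - ((t₁ : ℕ) : Fin k) = h - ((t₂ : ℕ) : Fin k) := by
        have := congrArg (· + 1) h5
        simpa [sub_add_cancel] using this
      have h7 : ((t₁ : ℕ) : Fin k) = ((t₂ : ℕ) : Fin k) := sub_right_injective h6
      have h8 := congrArg Fin.val h7
      rw [Fin.val_natCast, Fin.val_natCast, Nat.mod_eq_of_lt ht₁, Nat.mod_eq_of_lt ht₂] at h8
      exact h8
    · have hterm : ∀ j : ℕ,
          A (((ωc ^ j) (Fcell g (h, i))).1) (((ωc ^ j) (Fcell g (h, i))).2)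
            = A (i + (g (h + (j : ℕ)) : ZMod n)) i := by
        intro j
        rw [perm_pow_conj ωc (Fcell g) _ hωc_img, rhoC_iter_ne _ _ _ hi]
        rfl
      have hsums : ∀ t : ℕ,
          (∑ j ∈ Finset.range (t+1),
            A (((ωc ^ j) (Fcell g (h, i))).1) (((ωc ^ j) (Fcell g (h, i))).2))
          = ∑ j ∈ Finset.range (t+1), A (i + (g (h + (j : ℕ)) : ZMod n)) i :=
        fun t => Finset.sum_congr rfl (fun j _ => hterm j)
      rw [hsums t₁, hsums t₂] at hmod
      have h1 := teleColUp i h hBc t₁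
      have h2 := teleColUp i h hBc t₂
      have h3 : Ncol A g i (h + (t₁:ℕ)) ≡ Ncol A g i (h + (t₂:ℕ)) [ZMOD (2 * n * k + 1)] := by
        have h4 := ((h1.symm.trans hmod).trans h2).add_right (Ncol A g i (h - 1))
        simpa using h4
      have h5 := colNinj hmono hgn hfill hgs.2 i _ _ h3
      have h6 : ((t₁ : ℕ) : Fin k) = ((t₂ : ℕ) : Fin k) := add_left_cancel h5
      have h7 := congrArg Fin.val h6
      rw [Fin.val_natCast, Fin.val_natCast, Nat.mod_eq_of_lt ht₁, Nat.mod_eq_of_lt ht₂] at h7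
      exact h7
  · -- CompatibleSq
    set rho : Fin k × ZMod n → Fin k × ZMod n := fun x => rhoC (rhoR g x) with hrho
    have hτ : ∀ x, (ωr.trans ωc) (Fcell g x) = Fcell g (rho x) := by
      intro x
      rw [Equiv.trans_apply, hωr_img, hωc_img]
    have hpow := perm_pow_conj (ωr.trans ωc) (Fcell g) rho hτ
    set sv : Fin k → ZMod n := fun h => (g h : ZMod n) - (g (h-1) : ZMod n) with hsv
    have hsu : ∀ h, IsUnit (sv h) := by
      intro h
      have hx : ((((g h : ℤ) - (g (h-1) : ℤ)) : ℤ) : ZMod n) = sv h := by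
        rw [hsv]; push_cast; ring
      rw [← hx]
      exact sUnit (hgcd h)
    have rho_app : ∀ (h : Fin k) (i : ZMod n),
        rho (h, i) = (if i + sv h = 0 then h - 2 else h, i + sv h) := by
      intro h i
      show rhoC (rhoR g (h, i)) = _
      rw [rhoR_apply, rhoC_apply]
      have e : i + (g h : ZMod n) - (g (h-1) : ZMod n) = i + sv h := by rw [hsv]; ring
      rw [e]
      by_cases hcond : i + sv h = 0
      · rw [if_pos hcond, if_pos hcond]
        exact Prod.ext (by ring) rfl
      · rw [if_neg hcond, if_neg hcond]
        exact Prod.ext (by ring) rfl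
    have P1 : ∀ (h : Fin k) (m : ℕ), m < n →
        rho^[m] (h, (0:ZMod n)) = (h, (m : ZMod n) * sv h) := by
      intro h m
      induction m with
      | zero => intro _; simp
      | succ m ih =>
        intro hm
        rw [Function.iterate_succ_apply', ih (by omega), rho_app]
        have hne : ((m : ℕ) : ZMod n) * sv h + sv h = (((m+1 : ℕ)) : ZMod n) * sv h := by
          push_cast; ring
        rw [hne]
        have hnz : (((m+1 : ℕ)) : ZMod n) * sv h ≠ 0 := by
          intro e
          have h0 := ((hsu h).mul_left_eq_zero).mp e
          have hv := congrArg ZMod.val h0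
          rw [ZMod.val_cast_of_lt hm, ZMod.val_zero] at hv
          omega
        rw [if_neg hnz]
    have P2 : ∀ h : Fin k, rho^[n] (h, (0:ZMod n)) = (h - 2, 0) := by
      intro h
      have e : n - 1 + 1 = n := by have := NeZero.ne n; omega
      have step : rho^[n] (h, (0:ZMod n)) = rho^[n-1+1] (h, (0:ZMod n)) := by rw [e]
      rw [step, Function.iterate_succ_apply', P1 h (n-1) (by omega), rho_app]
      have e2 : ((n-1 : ℕ) : ZMod n) * sv h + sv h = 0 := by
        have e3 : ((n-1 : ℕ) : ZMod n) = ((n : ℕ) : ZMod n) - 1 := by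
          rw [Nat.cast_sub (by omega : 1 ≤ n)]
          push_cast
          ring
        rw [e3, ZMod.natCast_self]
        ring
      rw [if_pos e2]
      exact Prod.ext rfl e2
    have P3 : ∀ (eN : ℕ) (h : Fin k),
        rho^[n * eN] (h, (0:ZMod n)) = (h - 2 * ((eN : ℕ) : Fin k), 0) := by
      intro eN
      induction eN with
      | zero => intro h; simp
      | succ eN ih =>
        intro h
        have e : n * (eN + 1) = n * eN + n := by ring
        rw [e, Function.iterate_add_apply, P2 h, ih (h - 2)]
        refine Prod.ext ?_ rfl
        show h - 2 - 2 * ((eN : ℕ) : Fin k) = h - 2 * (((eN + 1 : ℕ)) : Fin k)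
        push_cast
        ring
    have Preach0 : ∀ (h : Fin k) (i : ZMod n), ∃ m : ℕ, m < n ∧
        rho^[m] (h, (0:ZMod n)) = (h, i) := by
      intro h i
      obtain ⟨u, hu⟩ := hsu h
      set w : ZMod n := i * ↑u⁻¹ with hw
      refine ⟨w.val, ZMod.val_lt _, ?_⟩
      rw [P1 h _ (ZMod.val_lt _)]
      refine Prod.ext rfl ?_
      show ((w.val : ℕ) : ZMod n) * sv h = i
      have hval : ((w.val : ℕ) : ZMod n) = w := ZMod.natCast_rightInverse w
      rw [hval, hw, ← hu, mul_assoc, Units.inv_mul, mul_one]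
    have Pto0 : ∀ (h : Fin k) (i : ZMod n), ∃ m : ℕ,
        rho^[m] (h, i) = (h - 2, (0:ZMod n)) := by
      intro h i
      obtain ⟨m, hmn, hm⟩ := Preach0 h i
      refine ⟨n - m, ?_⟩
      have e : n - m + m = n := by omega
      calc rho^[n-m] (h, i) = rho^[n-m] (rho^[m] (h, 0)) := by rw [hm]
        _ = rho^[n - m + m] (h, 0) := (Function.iterate_add_apply _ _ _ _).symm
        _ = rho^[n] (h, 0) := by rw [e]
        _ = (h - 2, 0) := P2 h
    have inv2 : ∀ c : Fin k, ∃ e : ℕ, 2 * ((e : ℕ) : Fin k) = c := by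
      intro c
      refine ⟨c.val * ((k+1)/2), ?_⟩
      have hk1 : 2 * ((k+1)/2) = k + 1 := by
        obtain ⟨t, ht⟩ := hk
        omega
      have e1 : (((c.val * ((k+1)/2)) : ℕ) : Fin k)
          = ((c.val : ℕ) : Fin k) * ((((k+1)/2 : ℕ)) : Fin k) := by push_cast; ring
      rw [e1]
      have h2inv : (2 : Fin k) * ((((k+1)/2 : ℕ)) : Fin k) = 1 := by
        have e2 : ((2 * ((k+1)/2) : ℕ) : Fin k) = ((k + 1 : ℕ) : Fin k) := by rw [hk1]
        push_cast at e2
        rw [Fin.natCast_self, zero_add] at e2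
        exact e2
      calc (2 : Fin k) * (((c.val : ℕ) : Fin k) * ((((k+1)/2 : ℕ)) : Fin k))
          = ((c.val : ℕ) : Fin k) * ((2 : Fin k) * ((((k+1)/2 : ℕ)) : Fin k)) := by ring
        _ = ((c.val : ℕ) : Fin k) * 1 := by rw [h2inv]
        _ = c := by rw [mul_one, Fin.cast_val_eq_self]
    have reach : ∀ x y : Fin k × ZMod n, ∃ e : ℕ, rho^[e] x = y := by
      rintro ⟨h, i⟩ ⟨h', i'⟩
      obtain ⟨e1, he1⟩ := Pto0 h i
      obtain ⟨e2, he2⟩ := inv2 (h - 2 - h')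
      obtain ⟨e3, _, he3⟩ := Preach0 h' i'
      refine ⟨e3 + (n * e2 + e1), ?_⟩
      rw [Function.iterate_add_apply, Function.iterate_add_apply, he1, P3 e2 (h-2)]
      have e4 : (h - 2) - 2 * ((e2 : ℕ) : Fin k) = h' := by rw [he2]; ring
      rw [e4, he3]
    intro c c' hc hc'
    obtain ⟨x, rfl⟩ := hsurj c ((hfill _ _).mp hc)
    obtain ⟨y, rfl⟩ := hsurj c' ((hfill _ _).mp hc')
    obtain ⟨e, he⟩ := reach x y
    exact ⟨e, by rw [hpow e x, he]⟩
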